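/- Let q be a prime power and let F ∈ 𝔽_q[x] be a polynomial of degree k ≥ 1 with constant term zero. Suppose the number of roots of F in 𝔽_q is coprime to q. Then there exists a real constant t < q such that for every positive integer n, any set A of polynomials of degree less than n in 𝔽_q[x], with the property that there do not exist distinct p₁, p₂ ∈ A and b ∈ 𝔽_q[x] with p₁ − p₂ = F(b), satisfies |A| ≤ 2·tⁿ. -/

import Mathlib

open Finset Polynomial

section GreenHelpers

/-! Helper definitions and lemmas for Green's theorem (Sárközy in function fields),
following Green's Croot–Lev–Pach-style polynomial method proof. -/

lemma green_rank_lemma {K X Y : Type} [Field K] (A : Finset X) (I : Finset Y)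
    (f g : Y → X → K) (Mat : X → X → K)
    (hdecomp : ∀ x ∈ A, ∀ y ∈ A, Mat x y = ∑ i ∈ I, f i x * g i y)
    (hdiag : ∀ x ∈ A, Mat x x ≠ 0)
    (hoff : ∀ x ∈ A, ∀ y ∈ A, x ≠ y → Mat x y = 0) :
    A.card ≤ I.card := by
  classical
  by_contra hlt
  push_neg at hlt
  have hnli : ¬ LinearIndependent K
      (fun x : {x // x ∈ A} => fun i : {i // i ∈ I} => f i.1 x.1) := by
    intro hli
    have h1 := hli.fintype_card_le_finrank
    rw [Module.finrank_fintype_fun_eq_card] at h1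
    simp only [Fintype.card_coe] at h1
    omega
  rw [Fintype.not_linearIndependent_iff] at hnli
  obtain ⟨c, hc, x0, hx0⟩ := hnli
  have hci : ∀ i ∈ I, ∑ x : {x // x ∈ A}, c x * f i x.1 = 0 := by
    intro i hi
    have := congrFun hc ⟨i, hi⟩
    simpa using this
  have key : ∑ x : {x // x ∈ A}, c x * Mat x.1 x0.1 = 0 := by
    have h1 : ∀ x : {x // x ∈ A}, c x * Mat x.1 x0.1
        = ∑ i ∈ I, (c x * f i x.1) * g i x0.1 := by
      intro x
      rw [hdecomp x.1 x.2 x0.1 x0.2, Finset.mul_sum]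
      refine Finset.sum_congr rfl fun i hi => by ring
    rw [Finset.sum_congr rfl (fun x _ => h1 x), Finset.sum_comm]
    refine Finset.sum_eq_zero fun i hi => ?_
    have h2 : ∑ x : {x // x ∈ A}, (c x * f i x.1) * g i x0.1
        = (∑ x : {x // x ∈ A}, c x * f i x.1) * g i x0.1 := by
      rw [Finset.sum_mul]
    rw [h2, hci i hi, zero_mul]
  have key2 : ∑ x : {x // x ∈ A}, c x * Mat x.1 x0.1 = c x0 * Mat x0.1 x0.1 := by
    refine Finset.sum_eq_single x0 (fun x _ hx => ?_) (by simp)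
    have hne : x.1 ≠ x0.1 := fun h => hx (Subtype.ext h)
    rw [hoff x.1 x.2 x0.1 x0.2 hne, mul_zero]
  rw [key2] at key
  exact (mul_ne_zero hx0 (hdiag x0.1 x0.2)) key

open Filter in
lemma green_exists_z (q : ℕ) (hq : 2 ≤ q) (σ : ℝ) (h0 : 0 ≤ σ) (hσ : σ < ((q : ℝ) - 1) / 2) :
    ∃ z : ℝ, 0 < z ∧ z < 1 ∧ (∑ j ∈ range q, z ^ j) * z ^ (-σ) < q := by
  set f : ℝ → ℝ := fun z => (∑ j ∈ range q, z ^ j) * z ^ (-σ) with hf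
  have hq0 : (0:ℝ) < q := by positivity
  have hf1 : f 1 = q := by
    simp [hf, Real.one_rpow]
  have hd1 : HasDerivAt (fun z : ℝ => ∑ j ∈ range q, z ^ j)
      (∑ j ∈ range q, (j : ℝ) * 1 ^ (j - 1)) 1 := by
    exact HasDerivAt.fun_sum fun j _ => hasDerivAt_pow j (1:ℝ)
  have hd2 : HasDerivAt (fun z : ℝ => z ^ (-σ)) (-σ * (1:ℝ) ^ (-σ - 1)) 1 :=
    Real.hasDerivAt_rpow_const (Or.inl one_ne_zero)
  have hD : HasDerivAt f ((∑ j ∈ range q, (j : ℝ) * 1 ^ (j - 1)) * 1 ^ (-σ)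
      + (∑ j ∈ range q, (1:ℝ) ^ j) * (-σ * (1:ℝ) ^ (-σ - 1))) 1 := hd1.mul hd2
  have hsum : (∑ j ∈ range q, (j : ℝ) * 1 ^ (j - 1)) = (q * ((q:ℝ) - 1)) / 2 := by
    have h1 := Finset.sum_range_id_mul_two q
    have h2 : ((∑ j ∈ range q, j : ℕ) : ℝ) * 2 = (q : ℝ) * ((q : ℝ) - 1) := by
      rw [show ((2:ℝ)) = ((2:ℕ):ℝ) by norm_num, ← Nat.cast_mul, h1, Nat.cast_mul,
        Nat.cast_sub (by omega : 1 ≤ q)]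
      norm_num
    have h3 : (∑ j ∈ range q, (j:ℝ)) = (q * ((q:ℝ)-1)) / 2 := by
      push_cast at h2 ⊢
      linarith
    simpa using h3
  have hDval : ((∑ j ∈ range q, (j : ℝ) * 1 ^ (j - 1)) * 1 ^ (-σ)
      + (∑ j ∈ range q, (1:ℝ) ^ j) * (-σ * (1:ℝ) ^ (-σ - 1)))
      = (q * ((q:ℝ)-1))/2 - σ * q := by
    rw [hsum]
    simp [Real.one_rpow]
    ring
  rw [hDval] at hD
  have hDpos : (0:ℝ) < (q * ((q:ℝ)-1))/2 - σ * q := by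
    have : σ * q < ((q:ℝ)-1)/2 * q := by
      apply mul_lt_mul_of_pos_right hσ hq0
    nlinarith
  have hslope := hasDerivAt_iff_tendsto_slope.mp hD
  have hev : ∀ᶠ z in nhdsWithin 1 (Set.Iio (1:ℝ)), 0 < slope f 1 z := by
    have h1 : ∀ᶠ z in nhdsWithin 1 {(1:ℝ)}ᶜ, 0 < slope f 1 z :=
      hslope (Ioi_mem_nhds hDpos)
    exact nhdsWithin_mono 1 (fun z hz => ne_of_lt hz) h1
  have hev2 : ∀ᶠ z in nhdsWithin 1 (Set.Iio (1:ℝ)), z ∈ Set.Ioo (0:ℝ) 1 := by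
    have h1 : ∀ᶠ z in nhdsWithin 1 (Set.Iio (1:ℝ)), z ∈ Set.Ioi (0:ℝ) :=
      mem_nhdsWithin_of_mem_nhds (Ioi_mem_nhds one_pos)
    have h2 : ∀ᶠ z in nhdsWithin 1 (Set.Iio (1:ℝ)), z ∈ Set.Iio (1:ℝ) :=
      self_mem_nhdsWithin
    filter_upwards [h1, h2] with z hz1 hz2
    exact ⟨hz1, hz2⟩
  obtain ⟨z, hz1, hz2⟩ := (hev.and hev2).exists
  refine ⟨z, hz2.1, hz2.2, ?_⟩
  rw [slope_def_field] at hz1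
  rcases div_pos_iff.mp hz1 with ⟨ha, hb⟩ | ⟨ha, hb⟩
  · linarith [hz2.2]
  · rw [hf1] at ha
    simp only [hf] at ha
    linarith

lemma green_count_lemma (q : ℕ) (hq : 2 ≤ q) (σ : ℝ) (h0 : 0 ≤ σ)
    (hσ : σ < ((q : ℝ) - 1) / 2) :
    ∃ t : ℝ, 1 ≤ t ∧ t < q ∧ ∀ n s : ℕ, (s : ℝ) ≤ σ * n →
      (((Fintype.piFinset (fun _ : Fin n => range q)).filter
          (fun β => ∑ i, β i ≤ s)).card : ℝ) ≤ t ^ n := by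
  classical
  obtain ⟨z, hz0, hz1, hzq⟩ := green_exists_z q hq σ h0 hσ
  set g : ℝ := ∑ j ∈ range q, z ^ j with hg
  have hg1 : (1:ℝ) ≤ g := by
    rw [hg]
    calc (1:ℝ) = z ^ 0 := by norm_num
    _ ≤ ∑ j ∈ range q, z ^ j :=
      Finset.single_le_sum (f := fun j => z ^ j) (fun j _ => by positivity)
        (by simp; omega)
  have hrp1 : (1:ℝ) ≤ z ^ (-σ) :=
    Real.one_le_rpow_of_pos_of_le_one_of_nonpos hz0 hz1.le (by linarith)
  refine ⟨g * z ^ (-σ),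
    le_trans (by norm_num) (mul_le_mul hg1 hrp1 (by norm_num) (by linarith)), hzq, ?_⟩
  intro n s hs
  have hpos : (0:ℝ) < z ^ s := by positivity
  set Lo := (Fintype.piFinset (fun _ : Fin n => range q)).filter (fun β => ∑ i, β i ≤ s)
    with hLo
  have hcard : (Lo.card : ℝ) * z ^ s ≤ g ^ n := by
    calc (Lo.card : ℝ) * z ^ s = ∑ _β ∈ Lo, z ^ s := by
          rw [Finset.sum_const, nsmul_eq_mul]
    _ ≤ ∑ β ∈ Lo, z ^ (∑ i, β i) := by
          refine Finset.sum_le_sum fun β hβ => ?_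
          exact pow_le_pow_of_le_one hz0.le hz1.le (mem_filter.mp hβ).2
    _ ≤ ∑ β ∈ Fintype.piFinset (fun _ : Fin n => range q), z ^ (∑ i, β i) := by
          refine Finset.sum_le_sum_of_subset_of_nonneg (filter_subset _ _) ?_
          intro β _ _; positivity
    _ = ∑ β ∈ Fintype.piFinset (fun _ : Fin n => range q), ∏ i, z ^ β i := by
          refine Finset.sum_congr rfl fun β _ => ?_
          rw [Finset.prod_pow_eq_pow_sum]
    _ = ∏ _i : Fin n, ∑ j ∈ range q, z ^ j := (Finset.prod_univ_sum _ _).symm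
    _ = g ^ n := by rw [Finset.prod_const, card_univ, Fintype.card_fin, hg]
  have h1 : (Lo.card : ℝ) ≤ g ^ n * (z ^ s)⁻¹ := by
    rw [← div_eq_mul_inv, le_div_iff₀ hpos]
    exact hcard
  have h2 : (z ^ s : ℝ)⁻¹ ≤ (z ^ (-σ)) ^ n := by
    have e1 : (z ^ s : ℝ)⁻¹ = z ^ (-(s:ℝ)) := by
      rw [Real.rpow_neg hz0.le, Real.rpow_natCast]
    have e2 : (z ^ (-σ)) ^ n = z ^ ((-σ) * n) := by
      rw [← Real.rpow_natCast (z ^ (-σ)) n, ← Real.rpow_mul hz0.le]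
    rw [e1, e2]
    apply Real.rpow_le_rpow_of_exponent_ge hz0 hz1.le
    nlinarith
  calc (Lo.card : ℝ) ≤ g ^ n * (z ^ s)⁻¹ := h1
  _ ≤ g ^ n * (z ^ (-σ)) ^ n := by
      refine mul_le_mul_of_nonneg_left h2 (by positivity)
  _ = (g * z ^ (-σ)) ^ n := (mul_pow _ _ _).symm

noncomputable def greenBP {K : Type} [Semiring K] (m : ℕ) (c : Fin m → K) : Polynomial K :=
  ∑ j : Fin m, Polynomial.C (c j) * Polynomial.X ^ (j : ℕ)

lemma greenBP_coeff {K : Type} [Semiring K] (m : ℕ) (c : Fin m → K) (j : Fin m) :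
    (greenBP m c).coeff (j : ℕ) = c j := by
  rw [greenBP, Polynomial.finset_sum_coeff]
  rw [Fintype.sum_eq_single j (fun j' hj' => ?_)]
  · rw [Polynomial.coeff_C_mul_X_pow]
    simp
  · rw [Polynomial.coeff_C_mul_X_pow]
    have : (j:ℕ) ≠ (j':ℕ) := fun h => hj' (Fin.ext h.symm)
    simp [this]

lemma greenBP_natDegree_le {K : Type} [Semiring K] (m : ℕ) (c : Fin m → K) :
    (greenBP m c).natDegree ≤ m - 1 := by
  rw [greenBP]
  refine Polynomial.natDegree_sum_le_of_forall_le _ _ fun j _ => ?_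
  refine le_trans (Polynomial.natDegree_C_mul_X_pow_le _ _) ?_
  have := j.2; omega

lemma greenBP_delta {K : Type} [Semiring K] (m : ℕ) (hm : 1 ≤ m) (a : K) :
    greenBP m (fun j => if (j : ℕ) = 0 then a else 0) = Polynomial.C a := by
  rw [greenBP]
  rw [Fintype.sum_eq_single (⟨0, hm⟩ : Fin m) (fun j' hj' => ?_)]
  · simp
  · have : (j' : ℕ) ≠ 0 := by
      intro h; exact hj' (Fin.ext h)
    simp [this]

open scoped Classical in
lemma green_card_zero {K : Type} [Field K] [Fintype K] (F : Polynomial K) (k : ℕ)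
    (hk : 1 ≤ k) (hdeg : F.natDegree = k) (m : ℕ) (hm : 1 ≤ m) :
    ((univ : Finset (Fin m → K)).filter (fun c => F.comp (greenBP m c) = 0)).card
      = ((univ : Finset K).filter (fun a => F.eval a = 0)).card := by
  refine Finset.card_bij' (fun (c : Fin m → K) _ => c ⟨0, hm⟩)
    (fun a _ => fun j => if (j : ℕ) = 0 then a else 0) ?_ ?_ ?_ ?_
  · intro c hc
    rw [mem_filter] at hc ⊢
    refine ⟨mem_univ _, ?_⟩
    have hcomp := hc.2
    have hnd : (greenBP m c).natDegree = 0 := by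
      have h1 : (F.comp (greenBP m c)).natDegree = k * (greenBP m c).natDegree := by
        rw [Polynomial.natDegree_comp, hdeg]
      rw [hcomp] at h1
      simp at h1
      rcases h1 with h | h
      · omega
      · exact h
    have hC : greenBP m c = Polynomial.C (c ⟨0, hm⟩) := by
      have := Polynomial.eq_C_of_natDegree_eq_zero hnd
      rw [this]
      congr 1
      have := greenBP_coeff m c ⟨0, hm⟩
      simpa using this
    rw [hC, Polynomial.comp_C] at hcomp
    exact (Polynomial.C_eq_zero).mp hcomp
  · intro a ha
    rw [mem_filter] at ha ⊢
    refine ⟨mem_univ _, ?_⟩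
    rw [greenBP_delta m hm a, Polynomial.comp_C, ha.2, map_zero]
  · intro c hc
    rw [mem_filter] at hc
    have hcomp := hc.2
    have hnd : (greenBP m c).natDegree = 0 := by
      have h1 : (F.comp (greenBP m c)).natDegree = k * (greenBP m c).natDegree := by
        rw [Polynomial.natDegree_comp, hdeg]
      rw [hcomp] at h1
      simp at h1
      rcases h1 with h | h
      · omega
      · exact h
    have hC : greenBP m c = Polynomial.C ((greenBP m c).coeff 0) :=
      Polynomial.eq_C_of_natDegree_eq_zero hnd
    funext j
    by_cases hj : (j : ℕ) = 0
    · have : j = ⟨0, hm⟩ := Fin.ext hj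
      rw [this]
      simp
    · simp only [hj, if_neg, ite_false]
      have h1 : c j = (greenBP m c).coeff (j : ℕ) := (greenBP_coeff m c j).symm
      rw [h1, hC]
      rw [Polynomial.coeff_C]
      simp [hj]
  · intro a ha
    simp

open scoped Classical in
lemma green_indicator {K : Type} [Field K] [Fintype K] (n : ℕ) (d : Polynomial K)
    (hd : d.natDegree < n) :
    ∏ i : Fin n, (1 - (d.coeff (i : ℕ)) ^ (Fintype.card K - 1)) = if d = 0 then 1 else 0
    := by
  by_cases h : d = 0
  · have hq1 : Fintype.card K - 1 ≠ 0 := by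
      have := Fintype.one_lt_card (α := K); omega
    simp [h, zero_pow hq1]
  · rw [if_neg h]
    refine Finset.prod_eq_zero (Finset.mem_univ (⟨d.natDegree, hd⟩ : Fin n)) ?_
    have h1 : d.leadingCoeff ^ (Fintype.card K - 1) = 1 :=
      FiniteField.pow_card_sub_one_eq_one _ (Polynomial.leadingCoeff_ne_zero.mpr h)
    rw [Polynomial.leadingCoeff] at h1
    show 1 - d.coeff d.natDegree ^ (Fintype.card K - 1) = 0
    rw [h1, sub_self]

noncomputable def greenG {K : Type} [CommRing K] (q : ℕ) (a : ℕ) (e : K) : K :=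
  (if a = 0 then 1 else 0) - (-1 : K) ^ a * (Nat.choose (q - 1) a : K) * e ^ (q - 1 - a)

lemma green_identity1 {K : Type} [CommRing K] (q : ℕ) (hq1 : 1 ≤ q) (e u : K) :
    1 - (e - u) ^ (q - 1) = ∑ a ∈ range q, greenG q a e * u ^ a := by
  have hbin : (e - u) ^ (q - 1)
      = ∑ a ∈ range q, ((-1:K)^a * (Nat.choose (q-1) a : K) * e ^ (q-1-a)) * u ^ a := by
    have h1 : e - u = -u + e := by ring
    rw [h1, add_pow]
    have h2 : q - 1 + 1 = q := by omega
    rw [h2]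
    refine Finset.sum_congr rfl fun a _ => ?_
    rw [neg_pow]
    ring
  have hione : ∑ a ∈ range q, (if a = 0 then (1:K) else 0) * u ^ a = 1 := by
    rw [Finset.sum_eq_single 0]
    · simp
    · intro a _ ha; simp [ha]
    · intro h; exact absurd (Finset.mem_range.mpr (by omega)) h
  calc 1 - (e - u) ^ (q - 1)
      = (∑ a ∈ range q, (if a = 0 then (1:K) else 0) * u ^ a)
        - ∑ a ∈ range q, ((-1:K)^a * (Nat.choose (q-1) a : K) * e ^ (q-1-a)) * u ^ a := by
        rw [hione, hbin]
    _ = ∑ a ∈ range q, greenG q a e * u ^ a := by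
        rw [← Finset.sum_sub_distrib]
        refine Finset.sum_congr rfl fun a _ => ?_
        rw [greenG]
        ring

lemma green_identity2 {K : Type} [CommRing K] (n : ℕ) (α : Fin n → ℕ) (u v : Fin n → K) :
    ∏ i, (u i - v i) ^ (α i)
      = ∑ β ∈ Fintype.piFinset (fun i => range (α i + 1)),
          (∏ i, ((-1:K)^(α i - β i) * (Nat.choose (α i) (β i) : K)))
            * (∏ i, (u i) ^ (β i)) * (∏ i, (v i) ^ (α i - β i)) := by
  have h1 : ∀ i : Fin n, (u i - v i)^(α i)
      = ∑ b ∈ range (α i + 1),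
          ((-1:K)^(α i - b) * (Nat.choose (α i) b : K)) * ((u i)^b * (v i)^(α i - b)) := by
    intro i
    have h : u i - v i = (u i) + (-(v i)) := by ring
    rw [h, add_pow]
    refine Finset.sum_congr rfl fun b _ => ?_
    rw [neg_pow]
    ring
  rw [Finset.prod_congr rfl (fun i _ => h1 i), Finset.prod_univ_sum]
  refine Finset.sum_congr rfl fun β _ => ?_
  rw [Finset.prod_mul_distrib, Finset.prod_mul_distrib, Finset.prod_mul_distrib]
  ring

noncomputable def greenBPM (K : Type) [CommRing K] (m : ℕ) :
    Polynomial (MvPolynomial (Fin m) K) :=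
  ∑ j : Fin m, Polynomial.C (MvPolynomial.X j) * Polynomial.X ^ (j : ℕ)

noncomputable def greenGG {K : Type} [CommRing K] (F : Polynomial K) (m : ℕ) :
    Polynomial (MvPolynomial (Fin m) K) :=
  (F.map MvPolynomial.C).comp (greenBPM K m)

noncomputable def greenGM {K : Type} [CommRing K] (q : ℕ) (a : ℕ) {m : ℕ}
    (P : MvPolynomial (Fin m) K) : MvPolynomial (Fin m) K :=
  (if a = 0 then 1 else 0)
    - MvPolynomial.C ((-1:K)^a * (Nat.choose (q-1) a : K)) * P ^ (q-1-a)

lemma greenBPM_map_eval {K : Type} [CommRing K] (m : ℕ) (c : Fin m → K) :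
    (greenBPM K m).map (MvPolynomial.eval c) = greenBP m c := by
  rw [greenBPM, greenBP, Polynomial.map_sum]
  refine Finset.sum_congr rfl fun j _ => ?_
  rw [Polynomial.map_mul, Polynomial.map_C, Polynomial.map_pow, Polynomial.map_X,
    MvPolynomial.eval_X]

lemma greenGG_map_eval {K : Type} [CommRing K] (F : Polynomial K) (m : ℕ) (c : Fin m → K) :
    (greenGG F m).map (MvPolynomial.eval c) = F.comp (greenBP m c) := by
  rw [greenGG, Polynomial.map_comp, greenBPM_map_eval, Polynomial.map_map]
  congr 1
  have h : (MvPolynomial.eval c).comp (MvPolynomial.C : K →+* MvPolynomial (Fin m) K)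
      = RingHom.id K := by
    ext x; simp
  rw [h, Polynomial.map_id]

lemma greenGG_coeff_eval {K : Type} [CommRing K] (F : Polynomial K) (m : ℕ) (c : Fin m → K)
    (i : ℕ) :
    MvPolynomial.eval c ((greenGG F m).coeff i) = (F.comp (greenBP m c)).coeff i := by
  rw [← greenGG_map_eval, Polynomial.coeff_map]

lemma greenBPM_coeff_totalDegree {K : Type} [CommRing K] [Nontrivial K] (m i : ℕ) :
    ((greenBPM K m).coeff i).totalDegree ≤ 1 := by
  rw [greenBPM, Polynomial.finset_sum_coeff]
  refine le_trans (MvPolynomial.totalDegree_finset_sum _ _) ?_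
  refine Finset.sup_le fun j _ => ?_
  rw [Polynomial.coeff_C_mul_X_pow]
  split
  · exact le_of_eq (MvPolynomial.totalDegree_X _)
  · simp

lemma greenBPM_pow_coeff_totalDegree {K : Type} [CommRing K] [Nontrivial K] (m l : ℕ) :
    ∀ i : ℕ, ((greenBPM K m ^ l).coeff i).totalDegree ≤ l := by
  induction l with
  | zero =>
    intro i
    rw [pow_zero, Polynomial.coeff_one]
    split <;> simp
  | succ l ih =>
    intro i
    rw [pow_succ, Polynomial.coeff_mul]
    refine le_trans (MvPolynomial.totalDegree_finset_sum _ _) ?_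
    refine Finset.sup_le fun p _ => ?_
    refine le_trans (MvPolynomial.totalDegree_mul _ _) ?_
    have h1 := ih p.1
    have h2 := greenBPM_coeff_totalDegree (K := K) m p.2
    omega

lemma greenGG_coeff_totalDegree {K : Type} [Field K] (F : Polynomial K) (m i : ℕ) :
    ((greenGG F m).coeff i).totalDegree ≤ F.natDegree := by
  rw [greenGG, Polynomial.comp, Polynomial.eval₂_eq_sum_range, Polynomial.finset_sum_coeff]
  refine le_trans (MvPolynomial.totalDegree_finset_sum _ _) ?_
  refine Finset.sup_le fun l hl => ?_
  rw [Polynomial.coeff_C_mul]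
  refine le_trans (MvPolynomial.totalDegree_mul _ _) ?_
  have h1 : ((F.map (MvPolynomial.C : K →+* MvPolynomial (Fin m) K)).coeff l).totalDegree
      = 0 := by
    rw [Polynomial.coeff_map]
    exact MvPolynomial.totalDegree_C _
  have h2 := greenBPM_pow_coeff_totalDegree (K := K) m l i
  have h3 : l ≤ F.natDegree := by
    have h5 := Finset.mem_range.mp hl
    have h4 : (F.map (MvPolynomial.C : K →+* MvPolynomial (Fin m) K)).natDegree
        ≤ F.natDegree := Polynomial.natDegree_map_le
    omega
  omega

lemma greenGM_eval {K : Type} [CommRing K] (q a m : ℕ) (P : MvPolynomial (Fin m) K)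
    (c : Fin m → K) :
    MvPolynomial.eval c (greenGM q a P) = greenG q a (MvPolynomial.eval c P) := by
  rw [greenGM, greenG, map_sub, map_mul, map_pow, MvPolynomial.eval_C]
  congr 1
  split <;> simp

lemma greenGM_totalDegree {K : Type} [Field K] (q a m : ℕ) (P : MvPolynomial (Fin m) K)
    (D : ℕ) (hP : P.totalDegree ≤ D) :
    (greenGM q a P).totalDegree ≤ (q - 1 - a) * D := by
  rw [greenGM]
  refine le_trans (MvPolynomial.totalDegree_sub _ _) ?_
  refine max_le ?_ ?_
  · split <;> simp
  · refine le_trans (MvPolynomial.totalDegree_mul _ _) ?_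
    have h1 := MvPolynomial.totalDegree_pow P (q - 1 - a)
    have h0 := MvPolynomial.totalDegree_C (σ := Fin m)
      ((-1:K)^a * (Nat.choose (q-1) a : K))
    calc (MvPolynomial.C ((-1:K)^a * (Nat.choose (q-1) a : K))
          : MvPolynomial (Fin m) K).totalDegree + (P ^ (q-1-a)).totalDegree
        ≤ 0 + (q-1-a) * P.totalDegree := by
          rw [h0]; exact Nat.add_le_add_left h1 0
      _ ≤ (q-1-a) * D := by
          rw [zero_add]
          exact Nat.mul_le_mul_left _ hP

lemma green_W_zero {K : Type} [Field K] [Fintype K] (q : ℕ) (hq : Fintype.card K = q)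
    (F : Polynomial K) (k : ℕ) (hdeg : F.natDegree = k)
    (m n : ℕ) (α : Fin n → ℕ)
    (hbad : k * ((q - 1) * n - ∑ i, α i) < m * (q - 1))
    (hαle : ∀ i, α i ≤ q - 1) :
    ∑ c : Fin m → K, ∏ i : Fin n, greenG q (α i) ((F.comp (greenBP m c)).coeff (i:ℕ))
      = 0 := by
  classical
  set H : MvPolynomial (Fin m) K :=
    ∏ i : Fin n, greenGM q (α i) ((greenGG F m).coeff (i:ℕ)) with hH
  have heval : ∀ c : Fin m → K, MvPolynomial.eval c H
      = ∏ i : Fin n, greenG q (α i) ((F.comp (greenBP m c)).coeff (i:ℕ)) := by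
    intro c
    rw [hH, map_prod]
    refine Finset.prod_congr rfl fun i _ => ?_
    rw [greenGM_eval, greenGG_coeff_eval]
  have hdegH : H.totalDegree ≤ ∑ i : Fin n, (q - 1 - α i) * k := by
    rw [hH]
    refine le_trans (MvPolynomial.totalDegree_finset_prod _ _) ?_
    refine Finset.sum_le_sum fun i _ => ?_
    exact greenGM_totalDegree q (α i) m _ k (hdeg ▸ greenGG_coeff_totalDegree F m i)
  have hsum : ∑ i : Fin n, (q - 1 - α i) = (q - 1) * n - ∑ i, α i := by
    have h1 : ∑ i : Fin n, ((q - 1 - α i) + α i) = (q - 1) * n := by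
      rw [Finset.sum_congr rfl (fun i _ => Nat.sub_add_cancel (hαle i))]
      simp [Finset.sum_const, mul_comm]
    rw [Finset.sum_add_distrib] at h1
    omega
  have hlt : H.totalDegree < (Fintype.card K - 1) * Fintype.card (Fin m) := by
    rw [hq, Fintype.card_fin]
    calc H.totalDegree ≤ ∑ i : Fin n, (q - 1 - α i) * k := hdegH
      _ = (∑ i : Fin n, (q - 1 - α i)) * k := by rw [Finset.sum_mul]
      _ = ((q - 1) * n - ∑ i, α i) * k := by rw [hsum]
      _ < (q - 1) * m := by
          have h6 := hbad
          rw [mul_comm k ((q - 1) * n - ∑ i, α i), mul_comm m (q - 1)] at h6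
          exact h6
  have hz := MvPolynomial.sum_eval_eq_zero H hlt
  rw [← hz]
  exact Finset.sum_congr rfl fun c _ => (heval c).symm

end GreenHelpers

/-- Green's theorem (Sárközy in `𝔽_q[x]`): let `q` be a prime power, `K` the field with
`q` elements, and `F ∈ K[x]` of degree `k ≥ 1` with constant term zero, such that the
number of roots of `F` in `K` is coprime to `q`. Then there is a real constant `t < q`
such that for every `n ≥ 1`, any set `A` of polynomials of degree `< n` containing no
distinct `p₁, p₂` with `p₁ - p₂ = F(b)` for some `b ∈ K[x]` satisfies `|A| ≤ 2 tⁿ`. -/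
theorem stmt_2 (q : ℕ) (K : Type) [Field K] [Fintype K] (hq : Fintype.card K = q)
    (F : Polynomial K) (k : ℕ) (hk : 1 ≤ k) (hdeg : F.natDegree = k)
    (h0 : F.coeff 0 = 0)
    (hroots : Nat.Coprime (Nat.card {a : K // Polynomial.eval a F = 0}) q) :
    ∃ t : ℝ, t < q ∧ ∀ n : ℕ, 0 < n → ∀ A : Finset (Polynomial K),
      (∀ p ∈ A, p.degree < (n : WithBot ℕ)) →
      (¬ ∃ p₁ ∈ A, ∃ p₂ ∈ A, p₁ ≠ p₂ ∧ ∃ b : Polynomial K, p₁ - p₂ = F.comp b) →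
      (A.card : ℝ) ≤ 2 * t ^ n := by
  classical
  have hq2 : 2 ≤ q := by rw [← hq]; exact Fintype.one_lt_card
  have hk1R : (1:ℝ) ≤ (k:ℝ) := by exact_mod_cast hk
  have hq2R : (2:ℝ) ≤ (q:ℝ) := by exact_mod_cast hq2
  set σ : ℝ := ((q:ℝ) - 1) * ((k:ℝ)^2 - 1) / (2 * (k:ℝ)^2) with hσdef
  have hk2 : (1:ℝ) ≤ (k:ℝ)^2 := by nlinarith
  have hσ0 : 0 ≤ σ := by
    apply div_nonneg
    · nlinarith
    · positivity
  have hσlt : σ < ((q:ℝ) - 1)/2 := by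
    rw [hσdef, div_lt_div_iff₀ (by positivity) (by norm_num)]
    nlinarith
  obtain ⟨t, ht1, htq, hcount⟩ := green_count_lemma q hq2 σ hσ0 hσlt
  refine ⟨t, htq, ?_⟩
  intro n hn A hA hfree
  set m : ℕ := (n - 1) / k + 1 with hmdef
  have hk0 : 0 < k := hk
  have hm1 : 1 ≤ m := by rw [hmdef]; exact Nat.le_add_left 1 _
  have hkm1 : k * (m - 1) ≤ n - 1 := by
    simp only [hmdef, Nat.add_sub_cancel]
    rw [mul_comm]
    exact Nat.div_mul_le_self (n-1) k
  have hnkm : n ≤ k * m := by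
    have h1 : (n-1)/k < m := by rw [hmdef]; exact Nat.lt_succ_self _
    have h2 : (n-1) < m * k := (Nat.div_lt_iff_lt_mul hk0).mp h1
    rw [mul_comm] at h2
    omega
  have hmn : m ≤ n := by
    have h1 : (n-1)/k ≤ n - 1 := Nat.div_le_self _ _
    rw [hmdef]
    omega
  have hdegA : ∀ p ∈ A, p.natDegree < n := by
    intro p hp
    by_cases h : p = 0
    · rw [h]; simpa using hn
    · exact (Polynomial.natDegree_lt_iff_degree_lt h).mpr (hA p hp)
  have hcompdeg : ∀ c : Fin m → K, (F.comp (greenBP m c)).natDegree < n := by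
    intro c
    have h1 : (F.comp (greenBP m c)).natDegree ≤ k * (m - 1) := by
      refine le_trans (Polynomial.natDegree_comp_le) ?_
      rw [hdeg]
      exact Nat.mul_le_mul_left k (greenBP_natDegree_le m c)
    omega
  set Mat : Polynomial K → Polynomial K → K := fun x y =>
    ∑ c : Fin m → K, ∏ i : Fin n,
      (1 - ((F.comp (greenBP m c) - (x - y)).coeff (i:ℕ)) ^ (q - 1)) with hMat
  set r : ℕ := ((univ : Finset K).filter (fun a => F.eval a = 0)).card with hrdef
  have hrcop : Nat.Coprime r q := by
    have h1 : Nat.card {a : K // Polynomial.eval a F = 0} = r := by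
      rw [Nat.card_eq_fintype_card, Fintype.card_subtype]
    rwa [h1] at hroots
  have hrK : (r : K) ≠ 0 := by
    intro hzero
    have hdvd : ringChar K ∣ r := (CharP.cast_eq_zero_iff K (ringChar K) r).mp hzero
    have hqK : ((q : ℕ) : K) = 0 := by rw [← hq]; exact FiniteField.cast_card_eq_zero K
    have hdvdq : ringChar K ∣ q := (CharP.cast_eq_zero_iff K (ringChar K) q).mp hqK
    have h1 : ringChar K ∣ 1 := by
      have h2 := Nat.dvd_gcd hdvd hdvdq
      rwa [Nat.Coprime.gcd_eq_one hrcop] at h2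
    exact CharP.ringChar_ne_one (Nat.dvd_one.mp h1)
  have hind : ∀ (c : Fin m → K) (x y : Polynomial K), x ∈ A → y ∈ A →
      ∏ i : Fin n, (1 - ((F.comp (greenBP m c) - (x - y)).coeff (i:ℕ)) ^ (q - 1))
        = if F.comp (greenBP m c) = x - y then 1 else 0 := by
    intro c x y hx hy
    have hd : (F.comp (greenBP m c) - (x - y)).natDegree < n := by
      refine lt_of_le_of_lt (Polynomial.natDegree_sub_le _ _) ?_
      have h1 := hcompdeg c
      have h2 : (x - y).natDegree < n := by
        refine lt_of_le_of_lt (Polynomial.natDegree_sub_le _ _) ?_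
        simp only [max_lt_iff]
        exact ⟨hdegA x hx, hdegA y hy⟩
      simp only [max_lt_iff]
      exact ⟨h1, h2⟩
    have h3 := green_indicator n _ hd
    rw [hq] at h3
    rw [h3]
    simp only [sub_eq_zero]
  have hMdiag : ∀ x ∈ A, Mat x x = (r : K) := by
    intro x hx
    simp only [hMat]
    have h1 : ∀ c : Fin m → K,
        ∏ i : Fin n, (1 - ((F.comp (greenBP m c) - (x - x)).coeff (i:ℕ)) ^ (q - 1))
          = if F.comp (greenBP m c) = 0 then 1 else 0 := by
      intro c
      rw [hind c x x hx hx]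
      simp
    rw [Finset.sum_congr rfl (fun c _ => h1 c)]
    rw [Finset.sum_boole]
    rw [hrdef]
    exact_mod_cast congrArg (fun z : ℕ => (z : K))
      (green_card_zero F k hk hdeg m hm1)
  have hMoff : ∀ x ∈ A, ∀ y ∈ A, x ≠ y → Mat x y = 0 := by
    intro x hx y hy hxy
    simp only [hMat]
    refine Finset.sum_eq_zero fun c _ => ?_
    rw [hind c x y hx hy]
    rw [if_neg]
    intro hcomp
    exact hfree ⟨x, hx, y, hy, hxy, greenBP m c, hcomp.symm⟩
  -- Fourier-free expansion of the matrix
  set W : (Fin n → ℕ) → K := fun α =>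
    ∑ c : Fin m → K, ∏ i : Fin n, greenG q (α i) ((F.comp (greenBP m c)).coeff (i:ℕ))
    with hW
  set PF : Finset (Fin n → ℕ) := Fintype.piFinset (fun _ : Fin n => range q) with hPF
  have hstepA : ∀ x y : Polynomial K, Mat x y
      = ∑ α ∈ PF, W α * ∏ i : Fin n, (x.coeff (i:ℕ) - y.coeff (i:ℕ)) ^ (α i) := by
    intro x y
    simp only [hMat]
    have h1 : ∀ c : Fin m → K,
        ∏ i : Fin n, (1 - ((F.comp (greenBP m c) - (x - y)).coeff (i:ℕ)) ^ (q - 1))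
        = ∑ α ∈ PF, (∏ i : Fin n, greenG q (α i) ((F.comp (greenBP m c)).coeff (i:ℕ)))
            * ∏ i : Fin n, (x.coeff (i:ℕ) - y.coeff (i:ℕ)) ^ (α i) := by
      intro c
      have h2 : ∀ i : Fin n,
          (1 - ((F.comp (greenBP m c) - (x - y)).coeff (i:ℕ)) ^ (q - 1))
          = ∑ a ∈ range q, greenG q a ((F.comp (greenBP m c)).coeff (i:ℕ))
              * (x.coeff (i:ℕ) - y.coeff (i:ℕ)) ^ a := by
        intro i
        rw [Polynomial.coeff_sub, Polynomial.coeff_sub]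
        exact green_identity1 q (by omega) _ _
      rw [Finset.prod_congr rfl (fun i _ => h2 i), Finset.prod_univ_sum]
      refine Finset.sum_congr rfl fun α _ => ?_
      rw [Finset.prod_mul_distrib]
    rw [Finset.sum_congr rfl (fun c _ => h1 c), Finset.sum_comm]
    refine Finset.sum_congr rfl fun α _ => ?_
    simp only [hW]
    rw [Finset.sum_mul]
  have hstepB : ∀ x y : Polynomial K, Mat x y
      = ∑ α ∈ PF.filter (fun α => m * (q-1) ≤ k * ((q-1) * n - ∑ i, α i)),
          W α * ∏ i : Fin n, (x.coeff (i:ℕ) - y.coeff (i:ℕ)) ^ (α i) := by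
    intro x y
    rw [hstepA x y]
    rw [← Finset.sum_filter_add_sum_filter_not PF
      (fun α => m * (q-1) ≤ k * ((q-1) * n - ∑ i, α i))]
    have hzero : ∀ α ∈ PF.filter (fun α => ¬ (m * (q-1) ≤ k * ((q-1) * n - ∑ i, α i))),
        W α * ∏ i : Fin n, (x.coeff (i:ℕ) - y.coeff (i:ℕ)) ^ (α i) = 0 := by
      intro α hα
      rw [Finset.mem_filter] at hα
      have hαle : ∀ i, α i ≤ q - 1 := by
        intro i
        have h3 := (Fintype.mem_piFinset.mp (hPF ▸ hα.1)) i
        rw [Finset.mem_range] at h3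
        omega
      have hbad : k * ((q-1) * n - ∑ i, α i) < m * (q-1) := Nat.not_le.mp hα.2
      simp only [hW]
      rw [green_W_zero q hq F k hdeg m n α hbad hαle, zero_mul]
    rw [Finset.sum_eq_zero hzero, add_zero]
  -- the sigma-set and the split by low degree
  set Dk : ℕ := k * ((q-1) * n) - m * (q-1) with hDk
  set s0 : ℕ := Dk / (2 * k) with hs0
  set cc : (Fin n → ℕ) → (Fin n → ℕ) → K :=
    fun α β => ∏ i : Fin n, ((-1:K)^(α i - β i) * (Nat.choose (α i) (β i) : K)) with hcc
  set Sg : Finset ((_ : Fin n → ℕ) × (Fin n → ℕ)) :=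
    (PF.filter (fun α => m * (q-1) ≤ k * ((q-1) * n - ∑ i, α i))).sigma
      (fun α => Fintype.piFinset (fun i => range (α i + 1))) with hSg
  have hstepC : ∀ x y : Polynomial K, Mat x y
      = ∑ P ∈ Sg, (W P.1 * cc P.1 P.2)
          * ((∏ i : Fin n, (x.coeff (i:ℕ)) ^ (P.2 i))
            * (∏ i : Fin n, (y.coeff (i:ℕ)) ^ (P.1 i - P.2 i))) := by
    intro x y
    rw [hstepB x y]
    have h1 : ∀ α ∈ PF.filter (fun α => m * (q-1) ≤ k * ((q-1) * n - ∑ i, α i)),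
        W α * ∏ i : Fin n, (x.coeff (i:ℕ) - y.coeff (i:ℕ)) ^ (α i)
        = ∑ β ∈ Fintype.piFinset (fun i => range (α i + 1)),
            (W α * cc α β) * ((∏ i : Fin n, (x.coeff (i:ℕ)) ^ (β i))
              * (∏ i : Fin n, (y.coeff (i:ℕ)) ^ (α i - β i))) := by
      intro α _
      rw [green_identity2 n α (fun i => x.coeff (i:ℕ)) (fun i => y.coeff (i:ℕ)),
        Finset.mul_sum]
      refine Finset.sum_congr rfl fun β _ => ?_
      simp only [hcc]
      ring
    rw [Finset.sum_congr rfl h1, Finset.sum_sigma']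
  -- membership facts
  have hSgfacts : ∀ P ∈ Sg, (∀ i, P.2 i ≤ P.1 i) ∧ (∀ i, P.1 i ≤ q - 1)
      ∧ k * (∑ i, P.1 i) ≤ Dk := by
    intro P hP
    rw [hSg, Finset.mem_sigma] at hP
    obtain ⟨hP1, hP2⟩ := hP
    rw [Finset.mem_filter] at hP1
    have hβα : ∀ i, P.2 i ≤ P.1 i := by
      intro i
      have := (Fintype.mem_piFinset.mp hP2) i
      rw [Finset.mem_range] at this
      omega
    have hαle : ∀ i, P.1 i ≤ q - 1 := by
      intro i
      have := (Fintype.mem_piFinset.mp (hPF ▸ hP1.1)) i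
      rw [Finset.mem_range] at this
      omega
    refine ⟨hβα, hαle, ?_⟩
    have hαsum : (∑ i, P.1 i) ≤ (q-1) * n := by
      calc (∑ i, P.1 i) ≤ ∑ _i : Fin n, (q-1) := Finset.sum_le_sum fun i _ => hαle i
      _ = n * (q-1) := by simp [Finset.sum_const, mul_comm]
      _ = (q-1) * n := by ring
    have hgood := hP1.2
    have hmulsub : k * ((q-1) * n - ∑ i, P.1 i)
        = k * ((q-1) * n) - k * (∑ i, P.1 i) := Nat.mul_sub k _ _
    rw [hmulsub] at hgood
    have hk1 : k * (∑ i, P.1 i) ≤ k * ((q-1) * n) := Nat.mul_le_mul_left k hαsum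
    omega
  have hDklt : Dk < (s0 + 1) * (2 * k) := by
    have h1 : Dk / (2*k) < s0 + 1 := by rw [hs0]; exact Nat.lt_succ_self _
    exact (Nat.div_lt_iff_lt_mul (by omega)).mp h1
  -- the two halves and fiber maps
  set Low : Finset (Fin n → ℕ) := PF.filter (fun β => ∑ i, β i ≤ s0) with hLow
  set fX : (Fin n → ℕ) → Polynomial K → K :=
    fun β x => ∏ i : Fin n, (x.coeff (i:ℕ)) ^ (β i) with hfX
  set S1 : Finset ((_ : Fin n → ℕ) × (Fin n → ℕ)) :=
    Sg.filter (fun P => ∑ j, P.2 j ≤ s0) with hS1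
  set S2 : Finset ((_ : Fin n → ℕ) × (Fin n → ℕ)) :=
    Sg.filter (fun P => ¬ (∑ j, P.2 j ≤ s0)) with hS2
  set g1 : (Fin n → ℕ) → Polynomial K → K :=
    fun β y => ∑ P ∈ S1.filter (fun P => P.2 = β),
      (W P.1 * cc P.1 P.2) * ∏ i : Fin n, (y.coeff (i:ℕ)) ^ (P.1 i - P.2 i) with hg1
  set g2 : (Fin n → ℕ) → Polynomial K → K :=
    fun γ x => ∑ P ∈ S2.filter (fun P => (fun j => P.1 j - P.2 j) = γ),
      (W P.1 * cc P.1 P.2) * ∏ i : Fin n, (x.coeff (i:ℕ)) ^ (P.2 i) with hg2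
  have hS1maps : ∀ P ∈ S1, P.2 ∈ Low := by
    intro P hP
    rw [hS1, Finset.mem_filter] at hP
    obtain ⟨hPSg, hPs⟩ := hP
    obtain ⟨hβα, hαle, _⟩ := hSgfacts P hPSg
    rw [hLow, Finset.mem_filter]
    refine ⟨?_, hPs⟩
    rw [hPF, Fintype.mem_piFinset]
    intro i
    rw [Finset.mem_range]
    have := hβα i
    have := hαle i
    omega
  have hS2maps : ∀ P ∈ S2, (fun j => P.1 j - P.2 j) ∈ Low := by
    intro P hP
    rw [hS2, Finset.mem_filter] at hP
    obtain ⟨hPSg, hPs⟩ := hP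
    obtain ⟨hβα, hαle, hksum⟩ := hSgfacts P hPSg
    set γ : Fin n → ℕ := fun j => P.1 j - P.2 j with hγdef
    have hsumeq : (∑ j, P.2 j) + (∑ j, γ j) = ∑ j, P.1 j := by
      rw [← Finset.sum_add_distrib]
      refine Finset.sum_congr rfl fun j _ => ?_
      have h9 := hβα j
      simp only [hγdef]
      omega
    have hγs : ∑ j, γ j ≤ s0 := by
      by_contra hγ
      push_neg at hγ
      have h5 : s0 + 1 ≤ ∑ j, P.2 j := by omega
      have h6 : 2*(s0+1) ≤ ∑ j, P.1 j := by omega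
      have h7 : k*(2*(s0+1)) ≤ k*(∑ j, P.1 j) := Nat.mul_le_mul_left k h6
      have h8 : k*(2*(s0+1)) = (s0+1)*(2*k) := by ring
      omega
    rw [hLow, Finset.mem_filter]
    constructor
    · rw [hPF, Fintype.mem_piFinset]
      intro i
      rw [Finset.mem_range]
      have h10 := hβα i
      have h11 := hαle i
      have h12 : γ i = P.1 i - P.2 i := by rw [hγdef]
      omega
    · exact hγs
  -- the decomposition
  have hdecompose : ∀ x ∈ A, ∀ y ∈ A, Mat x y
      = ∑ i ∈ Low.disjSum Low, (Sum.elim fX g2) i x * (Sum.elim g1 fX) i y := by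
    intro x hx y hy
    rw [Finset.sum_disjSum]
    simp only [Sum.elim_inl, Sum.elim_inr]
    rw [hstepC x y]
    rw [← Finset.sum_filter_add_sum_filter_not Sg (fun P => ∑ j, P.2 j ≤ s0)]
    rw [← hS1, ← hS2]
    congr 1
    · rw [← Finset.sum_fiberwise_of_maps_to (g := fun P => P.2) hS1maps]
      refine Finset.sum_congr rfl fun β hβ => ?_
      simp only [hg1, hfX]
      rw [Finset.mul_sum]
      refine Finset.sum_congr rfl fun P hP => ?_
      have hPβ : P.2 = β := (Finset.mem_filter.mp hP).2
      rw [← hPβ]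
      ring
    · rw [← Finset.sum_fiberwise_of_maps_to (g := fun P => fun j => P.1 j - P.2 j) hS2maps]
      refine Finset.sum_congr rfl fun γ hγ => ?_
      simp only [hg2, hfX]
      rw [Finset.sum_mul]
      refine Finset.sum_congr rfl fun P hP => ?_
      have hPγ : (fun j => P.1 j - P.2 j) = γ := (Finset.mem_filter.mp hP).2
      simp only [← hPγ]
      ring
  -- rank bound
  have hrank : A.card ≤ (Low.disjSum Low).card := by
    refine green_rank_lemma A (Low.disjSum Low) (Sum.elim fX g2) (Sum.elim g1 fX) Mat
      hdecompose ?_ hMoff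
    intro x hx
    rw [hMdiag x hx]
    exact hrK
  rw [Finset.card_disjSum] at hrank
  -- numeric conclusion
  have hs0σ : (s0 : ℝ) ≤ σ * n := by
    have hk0R : (0:ℝ) < (k:ℝ) := by linarith
    have hQ0 : (0:ℝ) ≤ (q:ℝ) - 1 := by linarith
    have hmq : m * (q-1) ≤ k * ((q-1) * n) := by
      calc m * (q-1) ≤ n * (q-1) := Nat.mul_le_mul_right _ hmn
      _ = 1 * ((q-1) * n) := by ring
      _ ≤ k * ((q-1) * n) := Nat.mul_le_mul_right _ hk
    have h1 : (s0:ℝ) * (2*(k:ℝ)) ≤ (Dk:ℝ) := by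
      have h2 := Nat.div_mul_le_self Dk (2*k)
      calc (s0:ℝ)*(2*(k:ℝ)) = ((s0 * (2*k) : ℕ) : ℝ) := by push_cast; ring
      _ ≤ (Dk:ℝ) := by exact_mod_cast h2
    have h2 : (Dk:ℝ) = (k:ℝ)*(((q:ℝ)-1)*(n:ℝ)) - (m:ℝ)*((q:ℝ)-1) := by
      rw [hDk, Nat.cast_sub hmq]
      push_cast [Nat.cast_sub (by omega : 1 ≤ q)]
      ring
    have h3 : (n:ℝ) ≤ (k:ℝ)*(m:ℝ) := by exact_mod_cast hnkm
    rw [hσdef, div_mul_eq_mul_div, le_div_iff₀ (by positivity)]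
    nlinarith [mul_le_mul_of_nonneg_left h1 hk0R.le,
      mul_le_mul_of_nonneg_left h3 hQ0]
  have hLowt : ((Low.card : ℕ) : ℝ) ≤ t ^ n := by
    rw [hLow, hPF]
    exact hcount n s0 hs0σ
  calc (A.card : ℝ) ≤ ((Low.card + Low.card : ℕ) : ℝ) := by exact_mod_cast hrank
    _ = 2 * ((Low.card : ℕ) : ℝ) := by rw [Nat.cast_add]; ring
    _ ≤ 2 * t ^ n := mul_le_mul_of_nonneg_left hLowt (by norm_num)
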